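/- The multiset of intervals in the interval decomposition of a persistence module M over {1,…,n} is determined by the ranks of the structure maps: the number of intervals [a,b) in the decomposition equals rank(M_a → M_{b-1}) − rank(M_{a-1} → M_{b-1}) − rank(M_a → M_b) + rank(M_{a-1} → M_b), where M_0 = 0 and M_{n+1} = 0 and M_i → M_j denotes the composite structure map for i ≤ j. -/

import Mathlib

/-- A one-parameter persistence module over the linear order `{1, …, n}`
(encoded by `Fin n`): vector spaces `V i` with structure maps `V i → V j` for
`i ≤ j`, functorially. -/
structure PersMod (k : Type) [Field k] (n : ℕ) where
  V : Fin n → Type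
  [acg : ∀ i, AddCommGroup (V i)]
  [mod : ∀ i, Module k (V i)]
  map : ∀ {i j : Fin n}, i ≤ j → (V i →ₗ[k] V j)
  map_id : ∀ i : Fin n, map (le_refl i) = LinearMap.id
  map_comp : ∀ {i j l : Fin n} (hij : i ≤ j) (hjl : j ≤ l),
    (map hjl).comp (map hij) = map (hij.trans hjl)

attribute [instance] PersMod.acg PersMod.mod

variable {k : Type} [Field k] {n : ℕ}

/-- A morphism of persistence modules: a natural transformation. -/
@[ext]
structure PersHom (M N : PersMod k n) where
  app : ∀ i, M.V i →ₗ[k] N.V i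
  natural : ∀ {i j : Fin n} (h : i ≤ j),
    (N.map h).comp (app i) = (app j).comp (M.map h)

/-- The sum of two morphisms of persistence modules. -/
def PersHom.addH {M N : PersMod k n} (φ ψ : PersHom M N) : PersHom M N where
  app i := φ.app i + ψ.app i
  natural := by
    intro i j h
    ext x
    have h1 := LinearMap.congr_fun (φ.natural h) x
    have h2 := LinearMap.congr_fun (ψ.natural h) x
    simp only [LinearMap.comp_apply, LinearMap.add_apply] at *
    rw [map_add, h1, h2]

/-- The scalar multiple of a morphism of persistence modules. -/
def PersHom.smulH {M N : PersMod k n} (c : k) (φ : PersHom M N) : PersHom M N where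
  app i := c • φ.app i
  natural := by
    intro i j h
    ext x
    have h1 := LinearMap.congr_fun (φ.natural h) x
    simp only [LinearMap.comp_apply, LinearMap.smul_apply] at *
    rw [map_smul, h1]

/-- The zero morphism of persistence modules. -/
def PersHom.zeroH (M N : PersMod k n) : PersHom M N where
  app _ := 0
  natural := by intro i j h; ext x; simp

/-- The identity morphism of a persistence module. -/
def PersHom.idH (M : PersMod k n) : PersHom M M where
  app _ := LinearMap.id
  natural := by intro i j h; ext x; simp

/-- Composition of morphisms of persistence modules. -/
def PersHom.compH {L M N : PersMod k n} (φ : PersHom M N) (ψ : PersHom L M) :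
    PersHom L N where
  app i := (φ.app i).comp (ψ.app i)
  natural := by
    intro i j h
    ext x
    have h1 := LinearMap.congr_fun (φ.natural h) (ψ.app i x)
    have h2 := LinearMap.congr_fun (ψ.natural h) x
    simp only [LinearMap.comp_apply] at *
    rw [h1, h2]

/-- The difference of two morphisms of persistence modules. -/
def PersHom.subH {M N : PersMod k n} (φ ψ : PersHom M N) : PersHom M N where
  app i := φ.app i - ψ.app i
  natural := by
    intro i j h
    ext x
    have h1 := LinearMap.congr_fun (φ.natural h) x
    have h2 := LinearMap.congr_fun (ψ.natural h) x
    simp only [LinearMap.comp_apply, LinearMap.sub_apply] at *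
    rw [map_sub, h1, h2]

/-- The space at index `i` of the interval module `I_{[a,b)}` (1-based
interval endpoints): the field `k` if `a ≤ i < b`, zero otherwise. -/
def intervalSpace (k : Type) [Field k] (n : ℕ) (a b : ℕ) (i : Fin n) :
    Submodule k k :=
  if a ≤ (i : ℕ) + 1 ∧ (i : ℕ) + 1 < b then ⊤ else ⊥

/-- The interval persistence module `I_{[a,b)}`: it is `k` on indices
`a ≤ i < b` with identity structure maps, and `0` elsewhere. -/
def intervalMod (k : Type) [Field k] (n : ℕ) (a b : ℕ) : PersMod k n where
  V i := ↥(intervalSpace k n a b i)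
  map {i j} h :=
    { toFun := fun x =>
        ⟨if a ≤ (j : ℕ) + 1 ∧ (j : ℕ) + 1 < b then (x : k) else 0, by
          by_cases hc : a ≤ (j : ℕ) + 1 ∧ (j : ℕ) + 1 < b <;>
            simp [intervalSpace, hc]⟩
      map_add' := by
        intro x y
        apply Subtype.ext
        simp only [Submodule.coe_add]
        split_ifs <;> simp
      map_smul' := by
        intro c x
        apply Subtype.ext
        simp only [Submodule.coe_smul, RingHom.id_apply]
        split_ifs <;> simp }
  map_id := by
    intro i
    ext x
    by_cases hc : a ≤ (i : ℕ) + 1 ∧ (i : ℕ) + 1 < b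
    · simp [hc]
    · have : (x : k) = 0 := by
        have hx := x.2
        simp [intervalSpace, hc] at hx
        exact congrArg Subtype.val hx
      simp [hc, this]
  map_comp := by
    intro i j l hij hjl
    ext x
    simp only [LinearMap.comp_apply, LinearMap.coe_mk, AddHom.coe_mk]
    by_cases hl : a ≤ (l : ℕ) + 1 ∧ (l : ℕ) + 1 < b
    · by_cases hj : a ≤ (j : ℕ) + 1 ∧ (j : ℕ) + 1 < b
      · simp [hl, hj]
      · have : (x : k) = 0 := by
          have hx := x.2
          have hij' : (i : ℕ) ≤ (j : ℕ) := hij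
          have hjl' : (j : ℕ) ≤ (l : ℕ) := hjl
          obtain ⟨hl1, hl2⟩ := hl
          have hi : ¬(a ≤ (i : ℕ) + 1 ∧ (i : ℕ) + 1 < b) := by
            rintro ⟨h1, h2⟩
            exact hj ⟨by omega, by omega⟩
          simp [intervalSpace, hi] at hx
          exact congrArg Subtype.val hx
        simp [hl, hj, this]
    · simp [hl]

/-- The direct sum (finite product) of a finite family of persistence
modules. -/
def dSum {g : ℕ} (F : Fin g → PersMod k n) : PersMod k n where
  V i := ∀ j, (F j).V i
  map {i j} h := LinearMap.pi fun l => ((F l).map h).comp (LinearMap.proj l)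
  map_id := by
    intro i
    apply LinearMap.ext
    intro x
    funext l
    have := LinearMap.congr_fun ((F l).map_id i) (x l)
    simpa [LinearMap.pi_apply] using this
  map_comp := by
    intro i j l hij hjl
    apply LinearMap.ext
    intro x
    funext m
    have := LinearMap.congr_fun ((F m).map_comp hij hjl) (x m)
    simpa [LinearMap.pi_apply] using this

/-- Isomorphism of persistence modules. -/
def PersMod.Iso (M N : PersMod k n) : Prop :=
  ∃ (φ : PersHom M N) (ψ : PersHom N M),
    φ.compH ψ = PersHom.idH N ∧ ψ.compH φ = PersHom.idH M

/-- The rank of the composite structure map `M_i → M_j` (1-based indices),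
with the conventions `M_0 = 0` and `M_{n+1} = 0` (rank `0` outside
`1 ≤ i ≤ j ≤ n`). -/
noncomputable def PersMod.rk (M : PersMod k n) (i j : ℕ) : ℕ :=
  if h : 1 ≤ i ∧ i ≤ j ∧ j ≤ n then
    Module.finrank k
      ↥(LinearMap.range (M.map (show (⟨i - 1, by omega⟩ : Fin n) ≤ ⟨j - 1, by omega⟩
          from Fin.mk_le_mk.mpr (by omega))))
  else 0


section Aux

/-- Rank is invariant under isomorphism of persistence modules. -/
lemma PersMod.rk_iso {M N : PersMod k n} (h : M.Iso N) (i j : ℕ) :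
    M.rk i j = N.rk i j := by
  obtain ⟨φ, ψ, h1, h2⟩ := h
  have hA : ∀ l, (φ.app l).comp (ψ.app l) = LinearMap.id :=
    fun l => congrFun (congrArg PersHom.app h1) l
  have hB : ∀ l, (ψ.app l).comp (φ.app l) = LinearMap.id :=
    fun l => congrFun (congrArg PersHom.app h2) l
  unfold PersMod.rk
  by_cases hc : 1 ≤ i ∧ i ≤ j ∧ j ≤ n
  · rw [dif_pos hc, dif_pos hc]
    set i' : Fin n := ⟨i - 1, by omega⟩ with hi'
    set j' : Fin n := ⟨j - 1, by omega⟩ with hj'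
    have hle : i' ≤ j' := Fin.mk_le_mk.mpr (by omega)
    have hψtop : LinearMap.range (ψ.app i') = ⊤ := by
      rw [LinearMap.range_eq_top]
      intro x
      exact ⟨φ.app i' x, LinearMap.congr_fun (hB i') x⟩
    have key : N.map hle = (φ.app j').comp ((M.map hle).comp (ψ.app i')) := by
      have hnat := φ.natural hle
      calc N.map hle = (N.map hle).comp ((φ.app i').comp (ψ.app i')) := by
            rw [hA i', LinearMap.comp_id]
        _ = ((N.map hle).comp (φ.app i')).comp (ψ.app i') := by
            rw [LinearMap.comp_assoc]
        _ = ((φ.app j').comp (M.map hle)).comp (ψ.app i') := by rw [hnat]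
        _ = (φ.app j').comp ((M.map hle).comp (ψ.app i')) := by
            rw [LinearMap.comp_assoc]
    have hrg : LinearMap.range (N.map hle)
        = Submodule.map (φ.app j') (LinearMap.range (M.map hle)) := by
      rw [key, LinearMap.range_comp,
        LinearMap.range_comp_of_range_eq_top _ hψtop]
    rw [hrg]
    exact (LinearEquiv.finrank_map_eq
      (LinearEquiv.ofLinear (φ.app j') (ψ.app j') (hA j') (hB j'))
      (LinearMap.range (M.map hle))).symm
  · rw [dif_neg hc, dif_neg hc]

/-- A linear equivalence between a pi submodule and the pi of submodules. -/
def piSubEquiv {ι : Type} {A : ι → Type} [∀ i, AddCommGroup (A i)]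
    [∀ i, Module k (A i)] (p : ∀ i, Submodule k (A i)) :
    ↥(Submodule.pi Set.univ p) ≃ₗ[k] ∀ i, ↥(p i) where
  toFun x i := ⟨x.1 i, x.2 i (Set.mem_univ i)⟩
  map_add' x y := rfl
  map_smul' c x := rfl
  invFun y := ⟨fun i => y i, fun i _ => (y i).2⟩
  left_inv x := rfl
  right_inv y := rfl

/-- Rank of a direct sum is the sum of the ranks. -/
lemma PersMod.rk_dSum {g : ℕ} (F : Fin g → PersMod k n)
    [∀ l i, FiniteDimensional k ((F l).V i)] (i j : ℕ) :
    (dSum F).rk i j = ∑ l, (F l).rk i j := by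
  unfold PersMod.rk
  by_cases hc : 1 ≤ i ∧ i ≤ j ∧ j ≤ n
  · simp only [dif_pos hc]
    set i' : Fin n := ⟨i - 1, by omega⟩ with hi'
    set j' : Fin n := ⟨j - 1, by omega⟩ with hj'
    have hle : i' ≤ j' := Fin.mk_le_mk.mpr (by omega)
    have hrange : LinearMap.range ((dSum F).map hle)
        = Submodule.pi Set.univ (fun l => LinearMap.range ((F l).map hle)) := by
      ext y
      simp only [dSum, LinearMap.mem_range, Submodule.mem_pi, Set.mem_univ,
        forall_true_left]
      constructor
      · rintro ⟨x, rfl⟩ l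
        exact fun _ => ⟨x l, rfl⟩
      · intro hy
        choose x hx using fun l => hy l (Set.mem_univ l)
        exact ⟨x, funext hx⟩
    rw [hrange]
    exact (LinearEquiv.finrank_eq (piSubEquiv (k := k) (A := fun l => (F l).V j')
      (fun l => LinearMap.range ((F l).map hle)))).trans
      (Module.finrank_pi_fintype k)
  · simp only [dif_neg hc, Finset.sum_const_zero]

instance (a b : ℕ) (i : Fin n) : FiniteDimensional k ((intervalMod k n a b).V i) := by
  show FiniteDimensional k ↥(intervalSpace k n a b i)
  infer_instance

/-- The rank of an interval module. -/
lemma PersMod.rk_interval (a b i j : ℕ) :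
    (intervalMod k n a b).rk i j =
      if 1 ≤ i ∧ i ≤ j ∧ j ≤ n ∧ a ≤ i ∧ j < b then 1 else 0 := by
  unfold PersMod.rk
  by_cases hc : 1 ≤ i ∧ i ≤ j ∧ j ≤ n
  · rw [dif_pos hc]
    set i' : Fin n := ⟨i - 1, by omega⟩ with hi'
    set j' : Fin n := ⟨j - 1, by omega⟩ with hj'
    have hle : i' ≤ j' := Fin.mk_le_mk.mpr (by omega)
    have hvi : (i' : ℕ) + 1 = i := by simp [hi']; omega
    have hvj : (j' : ℕ) + 1 = j := by simp [hj']; omega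
    by_cases hj : a ≤ (j' : ℕ) + 1 ∧ (j' : ℕ) + 1 < b
    · by_cases hi : a ≤ i
      · rw [if_pos ⟨hc.1, hc.2.1, hc.2.2, hi, by omega⟩]
        have hsrc : a ≤ (i' : ℕ) + 1 ∧ (i' : ℕ) + 1 < b := by
          constructor <;> omega
        have hsurj : LinearMap.range ((intervalMod k n a b).map hle) = ⊤ := by
          rw [LinearMap.range_eq_top]
          intro y
          obtain ⟨yv, hy⟩ := y
          refine ⟨⟨yv, ?_⟩, ?_⟩
          · simp [intervalMod, intervalSpace, hsrc]
          · apply Subtype.ext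
            simp [intervalMod, hj]
            rfl
        rw [hsurj, finrank_top]
        have htop : intervalSpace k n a b j' = ⊤ := by
          rw [intervalSpace, if_pos hj]
        show Module.finrank k ↥(intervalSpace k n a b j') = 1
        rw [htop, finrank_top, Module.finrank_self]
      · rw [if_neg (by intro h; exact hi h.2.2.2.1)]
        have hbot : intervalSpace k n a b i' = ⊥ := by
          rw [intervalSpace, if_neg (by omega)]
        have h0 : Module.finrank k ((intervalMod k n a b).V i') = 0 := by
          show Module.finrank k ↥(intervalSpace k n a b i') = 0
          rw [hbot]
          exact finrank_bot k k
        have hle' := LinearMap.finrank_range_le ((intervalMod k n a b).map hle)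
        exact Nat.le_zero.mp (le_of_le_of_eq hle' h0)
    · rw [if_neg (by intro h; exact hj ⟨by omega, by omega⟩)]
      have hbot : intervalSpace k n a b j' = ⊥ := by
        rw [intervalSpace, if_neg hj]
      have h0 : Module.finrank k ((intervalMod k n a b).V j') = 0 := by
        show Module.finrank k ↥(intervalSpace k n a b j') = 0
        rw [hbot]
        exact finrank_bot k k
      have hle' := Submodule.finrank_le (LinearMap.range ((intervalMod k n a b).map hle))
      exact Nat.le_zero.mp (le_of_le_of_eq hle' h0)
  · rw [dif_neg hc, if_neg (by intro h; exact hc ⟨h.1, h.2.1, h.2.2.1⟩)]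

end Aux

/-- The multiset of intervals in the interval decomposition of a persistence
module `M` over `{1, …, n}` is determined by the ranks of the structure maps:
the number of intervals `[a,b)` equals
`rank(M_a → M_{b-1}) − rank(M_{a-1} → M_{b-1}) − rank(M_a → M_b) + rank(M_{a-1} → M_b)`,
with `M_0 = M_{n+1} = 0`. -/
theorem interval_multiplicity_eq_rank_formula (k : Type) [Field k] (n : ℕ)
    (M : PersMod k n) [∀ i, FiniteDimensional k (M.V i)]
    (g : ℕ) (a b : Fin g → ℕ)
    (hval : ∀ j, 1 ≤ a j ∧ a j < b j ∧ b j ≤ n + 1)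
    (hiso : PersMod.Iso M (dSum fun j => intervalMod k n (a j) (b j)))
    (aa bb : ℕ) (h1 : 1 ≤ aa) (h2 : aa < bb) (h3 : bb ≤ n + 1) :
    ((Finset.univ.filter fun j => a j = aa ∧ b j = bb).card : ℤ) =
      (M.rk aa (bb - 1) : ℤ) - M.rk (aa - 1) (bb - 1)
        - M.rk aa bb + M.rk (aa - 1) bb :=  by
  have key : ∀ i j : ℕ, (M.rk i j : ℤ) =
      ∑ l, (if 1 ≤ i ∧ i ≤ j ∧ j ≤ n ∧ a l ≤ i ∧ j < b l then (1 : ℤ) else 0) := by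
    intro i j
    rw [PersMod.rk_iso hiso i j, PersMod.rk_dSum]
    push_cast
    refine Finset.sum_congr rfl fun l _ => ?_
    rw [PersMod.rk_interval (a l) (b l) i j]
    split_ifs <;> simp
  rw [Finset.card_filter, key, key, key, key, Nat.cast_sum,
    ← Finset.sum_sub_distrib, ← Finset.sum_sub_distrib, ← Finset.sum_add_distrib]
  refine Finset.sum_congr rfl fun l _ => ?_
  have hv := hval l
  push_cast
  split_ifs <;> omega
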